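/- Conversely, if the continuous-time positive system x' = Ax + Bu (A Metzler, B ≥ 0) is positively reachable on some interval [t₀,t₁], then A is diagonal and B contains an n×n monomial submatrix (in particular m ≥ n). -/

import Mathlib

open scoped Matrix Classical
open MeasureTheory

attribute [local instance] Matrix.linftyOpNormedRing Matrix.linftyOpNormedAlgebra

/-- A nonnegative square matrix is monomial: each row and each column contains
exactly one strictly positive entry, all other entries being zero. -/
def IsMonomial {n : ℕ} (A : Matrix (Fin n) (Fin n) ℝ) : Prop :=
  (∀ i j, 0 ≤ A i j) ∧ (∀ i, ∃! j, 0 < A i j) ∧ (∀ j, ∃! i, 0 < A i j)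

lemma matrix_pow_entry_nonneg {n : ℕ} {M : Matrix (Fin n) (Fin n) ℝ}
    (hM : ∀ i j, 0 ≤ M i j) (k : ℕ) : ∀ i j, 0 ≤ (M ^ k) i j := by
  induction k with
  | zero =>
    intro i j
    rw [pow_zero, Matrix.one_apply]
    split <;> norm_num
  | succ k ih =>
    intro i j
    rw [pow_succ, Matrix.mul_apply]
    exact Finset.sum_nonneg fun p _ => mul_nonneg (ih i p) (hM p j)

lemma exp_entry_bounds {n : ℕ} {A : Matrix (Fin n) (Fin n) ℝ}
    (hA : ∀ i j, i ≠ j → 0 ≤ A i j) {s : ℝ} (hs : 0 < s) :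
    (∀ i j, 0 ≤ (NormedSpace.exp (s • A)) i j) ∧
    (∀ i, 0 < (NormedSpace.exp (s • A)) i i) ∧
    (∀ i j, i ≠ j → (NormedSpace.exp (s • A)) i j = 0 → A i j = 0) := by
  classical
  set c : ℝ := ∑ i, |A i i| with hc
  set M : Matrix (Fin n) (Fin n) ℝ := A + c • 1 with hMdef
  have hMoffdiag : ∀ i j, i ≠ j → M i j = A i j := by
    intro i j hij
    simp [hMdef, Matrix.add_apply, Matrix.smul_apply, Matrix.one_apply, hij]
  have hM : ∀ i j, 0 ≤ M i j := by
    intro i j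
    by_cases hij : i = j
    · subst hij
      have h1 : |A i i| ≤ c :=
        Finset.single_le_sum (f := fun i => |A i i|) (fun i _ => abs_nonneg _)
          (Finset.mem_univ i)
      have h2 : M i i = A i i + c := by
        simp [hMdef, Matrix.add_apply, Matrix.smul_apply, Matrix.one_apply]
      rw [h2]
      have := neg_abs_le (A i i)
      linarith
    · rw [hMoffdiag i j hij]; exact hA i j hij
  have hsM : ∀ i j, 0 ≤ (s • M) i j := by
    intro i j
    have : (s • M) i j = s * M i j := rfl
    rw [this]
    exact mul_nonneg hs.le (hM i j)
  have hexpM := NormedSpace.exp_series_hasSum_exp' (𝕂 := ℝ) (s • M)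
  have hentry : ∀ i j : Fin n,
      HasSum (fun k : ℕ => ( (k.factorial : ℝ)⁻¹ • (s • M) ^ k) i j)
        ((NormedSpace.exp (s • M)) i j) := by
    intro i j
    let φ : Matrix (Fin n) (Fin n) ℝ →ₗ[ℝ] ℝ :=
      { toFun := fun X => X i j
        map_add' := fun _ _ => rfl
        map_smul' := fun _ _ => rfl }
    have hcont : Continuous φ := LinearMap.continuous_of_finiteDimensional φ
    exact hexpM.map φ.toAddMonoidHom hcont
  have hterm : ∀ (k : ℕ) (i j : Fin n), 0 ≤ ( (k.factorial : ℝ)⁻¹ • (s • M) ^ k) i j := by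
    intro k i j
    have h1 := matrix_pow_entry_nonneg hsM k i j
    have h2 : ( (k.factorial : ℝ)⁻¹ • (s • M) ^ k) i j =  (k.factorial : ℝ)⁻¹ * ((s • M) ^ k) i j := rfl
    rw [h2]
    have : (0:ℝ) ≤  (k.factorial : ℝ)⁻¹ := by positivity
    exact mul_nonneg this h1
  have hMnn : ∀ i j, 0 ≤ (NormedSpace.exp (s • M)) i j := fun i j =>
    (hentry i j).nonneg (fun k => hterm k i j)
  have hMdiag : ∀ i, 1 ≤ (NormedSpace.exp (s • M)) i i := by
    intro i
    have h := le_hasSum (hentry i i) 0 (fun k _ => hterm k i i)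
    simpa [Matrix.one_apply] using h
  have hMoff : ∀ i j, s * M i j ≤ (NormedSpace.exp (s • M)) i j := by
    intro i j
    have h := le_hasSum (hentry i j) 1 (fun k _ => hterm k i j)
    simpa [Matrix.smul_apply, smul_eq_mul] using h
  -- relate exp (s • M) and exp (s • A)
  have hcomm : Commute (s • A) ((s * c) • (1 : Matrix (Fin n) (Fin n) ℝ)) :=
    (Commute.one_right (s • A)).smul_right _
  have hsplit : s • M = s • A + (s * c) • (1 : Matrix (Fin n) (Fin n) ℝ) := by
    rw [hMdef, smul_add, smul_smul]
  have hexp1 : NormedSpace.exp ((s * c) • (1 : Matrix (Fin n) (Fin n) ℝ))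
      = Real.exp (s * c) • (1 : Matrix (Fin n) (Fin n) ℝ) := by
    rw [Matrix.smul_one_eq_diagonal, Matrix.exp_diagonal, Matrix.smul_one_eq_diagonal]
    have hpi : (NormedSpace.exp (fun _ : Fin n => s * c)) = fun _ : Fin n => Real.exp (s * c) := by
      funext i
      rw [Pi.coe_exp, Real.exp_eq_exp_ℝ]
    rw [hpi]
  have hmul : NormedSpace.exp (s • M)
      = Real.exp (s * c) • NormedSpace.exp (s • A) := by
    rw [hsplit, Matrix.exp_add_of_commute _ _ hcomm, hexp1, mul_smul_comm, mul_one]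
  have hMA : ∀ i j, (NormedSpace.exp (s • M)) i j
      = Real.exp (s * c) * (NormedSpace.exp (s • A)) i j := by
    intro i j
    rw [hmul]
    rfl
  have hepos : 0 < Real.exp (s * c) := Real.exp_pos _
  refine ⟨?_, ?_, ?_⟩
  · intro i j
    have h1 := hMnn i j
    have h2 := hMA i j
    nlinarith
  · intro i
    have h1 := hMdiag i
    have h2 := hMA i i
    nlinarith
  · intro i j hij hz
    have h1 := hMoff i j
    have h2 := hMA i j
    rw [hz, mul_zero] at h2
    rw [hMoffdiag i j hij] at h1
    have h3 := hA i j hij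
    nlinarith

theorem positive_reachability_implies_diagonal (n m : ℕ)
    (A : Matrix (Fin n) (Fin n) ℝ) (hA : ∀ i j, i ≠ j → 0 ≤ A i j)
    (B : Matrix (Fin n) (Fin m) ℝ) (hB : ∀ i j, 0 ≤ B i j)
    (t₀ t₁ : ℝ) (ht : t₀ < t₁)
    (hreach : ∀ xbar : Fin n → ℝ, (∀ i, 0 ≤ xbar i) →
      ∃ u : ℝ → Fin m → ℝ, (∀ τ j, 0 ≤ u τ j) ∧
        IntervalIntegrable
          (fun τ => (NormedSpace.exp ((t₁ - τ) • A)).mulVec (B.mulVec (u τ)))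
          volume t₀ t₁ ∧
        (∫ τ in t₀..t₁, (NormedSpace.exp ((t₁ - τ) • A)).mulVec (B.mulVec (u τ))) = xbar) :
    A.IsDiag ∧
      (∃ (f : Fin n → Fin m) (c : Fin n → ℝ), (∀ l, 0 < c l) ∧
        ∀ l, (fun p => B p (f l)) = c l • (Pi.single l 1 : Fin n → ℝ)) ∧
      n ≤ m := by
  classical
  have key : ∀ l : Fin n,
      (∀ i, i ≠ l → A i l = 0) ∧ ∃ j, 0 < B l j ∧ ∀ i, i ≠ l → B i j = 0 := by
    intro l
    obtain ⟨u, hu, hInt, hEq⟩ := hreach (Pi.single l 1) (fun i => by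
      by_cases h : i = l
      · subst h; simp
      · simp [Pi.single_eq_of_ne h])
    set F : ℝ → Fin n → ℝ :=
      fun τ => (NormedSpace.exp ((t₁ - τ) • A)).mulVec (B.mulVec (u τ)) with hF
    -- componentwise integrals
    have hcomp : ∀ i : Fin n, (∫ τ in t₀..t₁, F τ i) = (Pi.single l 1 : Fin n → ℝ) i := by
      intro i
      have h := (ContinuousLinearMap.proj (R := ℝ) (φ := fun _ : Fin n => ℝ)
        i).intervalIntegral_comp_comm hInt
      simp only [ContinuousLinearMap.proj_apply] at h
      rw [h, hEq]
    set μ : Measure ℝ := volume.restrict (Set.Ioo t₀ t₁) with hμ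
    have hIocIoo : Set.Ioo t₀ t₁ ⊆ Set.Ioc t₀ t₁ := Set.Ioo_subset_Ioc_self
    have hFint : Integrable F μ := by
      have h1 : IntegrableOn F (Set.Ioc t₀ t₁) volume := hInt.1
      exact h1.mono_set hIocIoo
    have hIntComp : ∀ i : Fin n, Integrable (fun τ => F τ i) μ := by
      intro i
      exact (ContinuousLinearMap.proj (R := ℝ) (φ := fun _ : Fin n => ℝ)
        i).integrable_comp hFint
    have hcompμ : ∀ i : Fin n, (∫ τ, F τ i ∂μ) = (Pi.single l 1 : Fin n → ℝ) i := by
      intro i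
      rw [← hcomp i, intervalIntegral.integral_of_le ht.le,
        integral_Ioc_eq_integral_Ioo]
    -- nonnegativity a.e.
    have hFnn : ∀ τ ∈ Set.Ioo t₀ t₁, ∀ i, 0 ≤ F τ i := by
      intro τ hτ i
      have hs : 0 < t₁ - τ := by
        have := hτ.2
        linarith
      obtain ⟨hEnn, _, _⟩ := exp_entry_bounds hA hs
      rw [hF]
      simp only [Matrix.mulVec, dotProduct]
      refine Finset.sum_nonneg fun k _ => mul_nonneg (hEnn i k) ?_
      exact Finset.sum_nonneg fun j _ => mul_nonneg (hB k j) (hu τ j)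
    have hmemae : ∀ᵐ τ ∂μ, τ ∈ Set.Ioo t₀ t₁ := ae_restrict_mem measurableSet_Ioo
    -- off components vanish a.e.
    have hae0 : ∀ i : Fin n, i ≠ l → (fun τ => F τ i) =ᵐ[μ] 0 := by
      intro i hi
      have hnn : 0 ≤ᵐ[μ] fun τ => F τ i := by
        filter_upwards [hmemae] with τ hτ
        exact hFnn τ hτ i
      have hzero : (∫ τ, F τ i ∂μ) = 0 := by
        rw [hcompμ i, Pi.single_eq_of_ne hi]
      exact (integral_eq_zero_iff_of_nonneg_ae hnn (hIntComp i)).1 hzero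
    -- existence of a good time
    have hexists : ∃ τ ∈ Set.Ioo t₀ t₁, (∀ i, i ≠ l → F τ i = 0) ∧ 0 < F τ l := by
      by_contra hcon
      push_neg at hcon
      have hall : ∀ᵐ τ ∂μ, ∀ i, i ≠ l → F τ i = 0 := by
        rw [ae_all_iff]
        intro i
        by_cases hi : i = l
        · subst hi
          exact Filter.Eventually.of_forall fun τ h => absurd rfl h
        · filter_upwards [hae0 i hi] with τ h _
          exact h
      have hFl0 : (fun τ => F τ l) =ᵐ[μ] 0 := by
        filter_upwards [hall, hmemae] with τ h1 h2
        have h3 := hcon τ h2 h1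
        have h4 := hFnn τ h2 l
        simpa using le_antisymm h3 h4
      have : (∫ τ, F τ l ∂μ) = 0 := by
        rw [integral_congr_ae hFl0]
        simp
      rw [hcompμ l, Pi.single_eq_same] at this
      norm_num at this
    obtain ⟨τ, hτmem, hzero, hpos⟩ := hexists
    have hs : 0 < t₁ - τ := by
      have := hτmem.2
      linarith
    obtain ⟨hEnn, hEpos, hEzero⟩ := exp_entry_bounds hA hs
    set E : Matrix (Fin n) (Fin n) ℝ := NormedSpace.exp ((t₁ - τ) • A) with hE
    set v : Fin n → ℝ := B.mulVec (u τ) with hv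
    have hvnn : ∀ k, 0 ≤ v k := by
      intro k
      rw [hv]
      simp only [Matrix.mulVec, dotProduct]
      exact Finset.sum_nonneg fun j _ => mul_nonneg (hB k j) (hu τ j)
    have hFform : ∀ i, F τ i = ∑ k, E i k * v k := by
      intro i
      rw [hF]
      rfl
    -- find k with E l k * v k > 0
    have hsumpos : 0 < ∑ k, E l k * v k := by rw [← hFform]; exact hpos
    have hexk : ∃ k, 0 < E l k * v k := by
      by_contra h
      push_neg at h
      have : (∑ k, E l k * v k) ≤ 0 := Finset.sum_nonpos fun k _ => h k
      linarith
    obtain ⟨k, hk⟩ := hexk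
    have hvk : 0 < v k := by
      rcases (hvnn k).lt_or_eq with h | h
      · exact h
      · rw [← h, mul_zero] at hk; linarith
    have hkl : k = l := by
      by_contra hkl
      have h1 : E k k * v k ≤ ∑ k', E k k' * v k' :=
        Finset.single_le_sum (f := fun k' => E k k' * v k')
          (fun k' _ => mul_nonneg (hEnn k k') (hvnn k')) (Finset.mem_univ k)
      have h2 : F τ k = 0 := hzero k hkl
      rw [hFform k] at h2
      nlinarith [hEpos k]
    have hvl : 0 < v l := hkl ▸ hvk
    have hterm0 : ∀ i, i ≠ l → ∀ k', E i k' * v k' = 0 := by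
      intro i hi
      have h2 : F τ i = 0 := hzero i hi
      rw [hFform i] at h2
      have := (Finset.sum_eq_zero_iff_of_nonneg
        (fun k' (_ : k' ∈ Finset.univ) => mul_nonneg (hEnn i k') (hvnn k'))).1 h2
      intro k'
      exact this k' (Finset.mem_univ k')
    constructor
    · -- column l of A off-diagonal vanishes
      intro i hi
      have h1 : E i l * v l = 0 := hterm0 i hi l
      have h2 : E i l = 0 := by
        rcases mul_eq_zero.1 h1 with h | h
        · exact h
        · exfalso; rw [h] at hvl; exact lt_irrefl _ hvl
      exact hEzero i l hi h2
    · -- monomial column of B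
      have hvlform : v l = ∑ j, B l j * u τ j := rfl
      have hexj : ∃ j, 0 < B l j * u τ j := by
        by_contra h
        push_neg at h
        have : (∑ j, B l j * u τ j) ≤ 0 := Finset.sum_nonpos fun j _ => h j
        rw [← hvlform] at this
        linarith
      obtain ⟨j, hj⟩ := hexj
      have hBlj : 0 < B l j := by
        rcases (hB l j).lt_or_eq with h | h
        · exact h
        · rw [← h, zero_mul] at hj; linarith
      have huj : 0 < u τ j := by
        rcases (hu τ j).lt_or_eq with h | h
        · exact h
        · rw [← h, mul_zero] at hj; linarith
      refine ⟨j, hBlj, ?_⟩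
      intro i hi
      -- v i = 0
      have h1 : E i i * v i = 0 := hterm0 i hi i
      have hvi : v i = 0 := by
        rcases mul_eq_zero.1 h1 with h | h
        · exfalso; exact ne_of_gt (hEpos i) h
        · exact h
      have hviform : v i = ∑ j', B i j' * u τ j' := rfl
      rw [hviform] at hvi
      have := (Finset.sum_eq_zero_iff_of_nonneg
        (fun j' (_ : j' ∈ Finset.univ) => mul_nonneg (hB i j') (hu τ j'))).1 hvi
      have h3 : B i j * u τ j = 0 := this j (Finset.mem_univ j)
      rcases mul_eq_zero.1 h3 with h | h
      · exact h
      · exfalso; rw [h] at huj; exact lt_irrefl _ huj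
  -- assemble conclusions
  choose hAdiag hBcol using key
  choose f hf using hBcol
  refine ⟨?_, ⟨f, fun l => B l (f l), fun l => (hf l).1, ?_⟩, ?_⟩
  · intro i j hij
    exact hAdiag j i hij
  · intro l
    funext p
    by_cases hp : p = l
    · subst hp
      simp [Pi.single_eq_same]
    · rw [(hf l).2 p hp]
      simp [Pi.single_eq_of_ne hp]
  · have hinj : Function.Injective f := by
      intro a b hab
      by_contra hne
      have h1 : 0 < B a (f a) := (hf a).1
      have h2 : B a (f b) = 0 := (hf b).2 a hne
      rw [hab, h2] at h1
      exact lt_irrefl _ h1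
    simpa using Fintype.card_le_of_injective f hinj
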